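/- The ℚ-linear maps α̃¹ and α̃² of W defined by α̃¹: Ẽ₁^(ℓ) ↦ Ẽ₄^(ℓ), Ẽ₂^(ℓ) ↦ −Ẽ₉^(ℓ), Ẽ₃^(ℓ) ↦ −Ẽ₁^(ℓ), Ẽ₄^(ℓ) ↦ −Ẽ₃^(ℓ), Ẽ₅^(ℓ) ↦ −Ẽ₈^(ℓ), Ẽ₆^(ℓ) ↦ −Ẽ₅^(ℓ), Ẽ₇^(ℓ) ↦ −Ẽ₂^(ℓ), Ẽ₈^(ℓ) ↦ Ẽ₆^(ℓ), Ẽ₉^(ℓ) ↦ Ẽ₇^(ℓ), Ẽ₁₀^(ℓ) ↦ Ẽ₁₀^(ℓ), Ẽ₁₁^(ℓ) ↦ Ẽ₁₁^(ℓ), Ẽ₁₂^(ℓ) ↦ Ẽ₁₂^(ℓ), and α̃²: Ẽ₁^(ℓ) ↦ Ẽ₉^(ℓ), Ẽ₂^(ℓ) ↦ Ẽ₅^(ℓ), Ẽ₃^(ℓ) ↦ Ẽ₂^(ℓ), Ẽ₄^(ℓ) ↦ Ẽ₇^(ℓ), Ẽ₅^(ℓ) ↦ Ẽ₃^(ℓ),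 Ẽ₆^(ℓ) ↦ Ẽ₄^(ℓ), Ẽ₇^(ℓ) ↦ Ẽ₆^(ℓ), Ẽ₈^(ℓ) ↦ Ẽ₁^(ℓ), Ẽ₉^(ℓ) ↦ Ẽ₈^(ℓ), Ẽ₁₀^(ℓ) ↦ Ẽ₁₀^(ℓ), Ẽ₁₁^(ℓ) ↦ Ẽ₁₁^(ℓ), Ẽ₁₂^(ℓ) ↦ Ẽ₁₂^(ℓ) (for ℓ = 1, 2) preserve the bilinear form and map the Niemeier lattice N onto itself; each has order 3, they commute, and the subgroup of the automorphism group of N they generate is isomorphic to ℤ/3 × ℤ/3. -/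

import Mathlib

noncomputable section

abbrev JN : Type := Fin 12 × Fin 2
abbrev WN : Type := JN → ℚ

/-- The simple roots `Ẽ_j^(k)` (with `k : Fin 2` corresponding to `k+1 ∈ {1,2}`). -/
def Et (j : Fin 12) (k : Fin 2) : WN := Pi.single (j, k) 1

/-- Gram coefficients of the (positive definite) bilinear form on `W`. -/
def GN : JN → JN → ℚ := fun i j =>
  if i.1 = j.1 then (if i.2 = j.2 then 2 else -1) else 0

/-- The symmetric bilinear form on `W`. -/
def BW (x y : WN) : ℚ := ∑ i : JN, ∑ j : JN, x i * GN i j * y j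

/-- `Ẽ_j := Ẽ_j^(1) + 2·Ẽ_j^(2)`. -/
def EtV (j : Fin 12) : WN := Et j 0 + 2 • Et j 1

/-- The rows of the generating matrix of the glue code. -/
def glueMat : Fin 6 → Fin 12 → ℚ :=
  ![![0, 1, 1, 1, 1, 1, 1, 0, 0, 0, 0, 0],
    ![-1, 0, 1, -1, -1, 1, 0, 1, 0, 0, 0, 0],
    ![-1, 1, 0, 1, -1, -1, 0, 0, 1, 0, 0, 0],
    ![-1, -1, 1, 0, 1, -1, 0, 0, 0, 1, 0, 0],
    ![-1, -1, -1, 1, 0, 1, 0, 0, 0, 0, 1, 0],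
    ![-1, 1, -1, -1, 1, 0, 0, 0, 0, 0, 0, 1]]

/-- The glue vectors `w_i := (1/3)·∑_j a_{ij}·Ẽ_j`. -/
def wvec (i : Fin 6) : WN := (3 : ℚ)⁻¹ • ∑ j : Fin 12, glueMat i j • EtV j

/-- The Niemeier lattice `N` of type `A₂¹²`. -/
def NL : Submodule ℤ WN :=
  Submodule.span ℤ ({x | ∃ j k, x = Et j k} ∪ Set.range wvec)

/-- Index table for `α̃¹` (0-indexed: block `j` of the root lattice is sent to block `idx1 j`). -/
def idx1 : Fin 12 → Fin 12 := ![3, 8, 0, 2, 7, 4, 1, 5, 6, 9, 10, 11]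

/-- Sign table for `α̃¹`. -/
def sgn1 : Fin 12 → ℚ := ![1, -1, -1, -1, -1, -1, -1, 1, 1, 1, 1, 1]

/-- Index table for `α̃²`. -/
def idx2 : Fin 12 → Fin 12 := ![8, 4, 1, 6, 2, 3, 5, 0, 7, 9, 10, 11]

/-! ### Auxiliary data -/

def inv1 : Fin 12 → Fin 12 := ![2, 6, 3, 0, 5, 7, 8, 4, 1, 9, 10, 11]
def inv2 : Fin 12 → Fin 12 := ![7, 2, 4, 5, 1, 6, 3, 8, 0, 9, 10, 11]

def p1 : Fin 12 ≃ Fin 12 := ⟨idx1, inv1, by decide, by decide⟩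
def p2 : Fin 12 ≃ Fin 12 := ⟨idx2, inv2, by decide, by decide⟩

/-- Integer version of the sign table. -/
def sgnZ : Fin 12 → ℤ := ![1, -1, -1, -1, -1, -1, -1, 1, 1, 1, 1, 1]

/-- Integer version of the glue matrix. -/
def glueZ : Fin 6 → Fin 12 → ℤ :=
  ![![0, 1, 1, 1, 1, 1, 1, 0, 0, 0, 0, 0],
    ![-1, 0, 1, -1, -1, 1, 0, 1, 0, 0, 0, 0],
    ![-1, 1, 0, 1, -1, -1, 0, 0, 1, 0, 0, 0],
    ![-1, -1, 1, 0, 1, -1, 0, 0, 0, 1, 0, 0],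
    ![-1, -1, -1, 1, 0, 1, 0, 0, 0, 0, 1, 0],
    ![-1, 1, -1, -1, 1, 0, 0, 0, 0, 0, 0, 1]]

lemma sgn1_eq_cast : ∀ j, sgn1 j = (sgnZ j : ℚ) := by
  intro j; fin_cases j <;> rfl

lemma glueMat_eq_cast : ∀ k m, glueMat k m = (glueZ k m : ℚ) := by
  intro k m; fin_cases k <;> fin_cases m <;> rfl

lemma hs1 : ∀ j, sgn1 j * sgn1 j = 1 := by
  intro j
  rw [sgn1_eq_cast]
  exact_mod_cast (by decide : ∀ j : Fin 12, sgnZ j * sgnZ j = 1) j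

/-- Construct a signed block-permutation linear automorphism of `WN`. -/
def mkA (σ : Fin 12 ≃ Fin 12) (s : Fin 12 → ℚ) (hs : ∀ j, s j * s j = 1) : WN ≃ₗ[ℚ] WN where
  toFun x := fun p => s (σ.symm p.1) * x (σ.symm p.1, p.2)
  invFun x := fun p => s p.1 * x (σ p.1, p.2)
  map_add' x y := by funext p; simp [mul_add]
  map_smul' c x := by funext p; simp; ring
  left_inv x := by
    funext p
    show s p.1 * (s (σ.symm (σ p.1)) * x (σ.symm (σ p.1), p.2)) = x p
    rw [σ.symm_apply_apply, ← mul_assoc, hs, one_mul]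
  right_inv x := by
    funext p
    show s (σ.symm p.1) * (s (σ.symm p.1) * x (σ (σ.symm p.1), p.2)) = x p
    rw [σ.apply_symm_apply, ← mul_assoc, hs, one_mul]

lemma mkA_apply (σ : Fin 12 ≃ Fin 12) (s : Fin 12 → ℚ) (hs : ∀ j, s j * s j = 1)
    (x : WN) (p : JN) : mkA σ s hs x p = s (σ.symm p.1) * x (σ.symm p.1, p.2) := rfl

lemma mkA_Et (σ : Fin 12 ≃ Fin 12) (s : Fin 12 → ℚ) (hs : ∀ j, s j * s j = 1)
    (j : Fin 12) (k : Fin 2) : mkA σ s hs (Et j k) = s j • Et (σ j) k := by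
  funext p
  obtain ⟨i, l⟩ := p
  show s (σ.symm i) * Et j k (σ.symm i, l) = s j * Et (σ j) k (i, l)
  simp only [Et, Pi.single_apply]
  by_cases h : i = σ j
  · subst h
    rw [σ.symm_apply_apply]
    have : ((σ j, l) = (σ j, k)) ↔ ((j, l) = (j, k)) := by simp [Prod.ext_iff]
    rw [if_congr this rfl rfl]
  · have h2 : σ.symm i ≠ j := fun hh => h (by rw [← hh, σ.apply_symm_apply])
    rw [if_neg (by simp [Prod.ext_iff, h2]), if_neg (by simp [Prod.ext_iff, h]),
      mul_zero, mul_zero]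

lemma mkA_EtV (σ : Fin 12 ≃ Fin 12) (s : Fin 12 → ℚ) (hs : ∀ j, s j * s j = 1)
    (j : Fin 12) : mkA σ s hs (EtV j) = s j • EtV (σ j) := by
  have : EtV j = Et j 0 + 2 • Et j 1 := rfl
  rw [this, map_add, map_nsmul, mkA_Et, mkA_Et]
  show _ = s j • (Et (σ j) 0 + 2 • Et (σ j) 1)
  rw [smul_add, smul_comm]

/-! ### Preservation of the bilinear form -/

def e' (σ : Fin 12 ≃ Fin 12) : JN ≃ JN := Equiv.prodCongr σ (Equiv.refl _)

lemma GN_perm (σ : Fin 12 ≃ Fin 12) (i j : JN) :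
    GN (σ i.1, i.2) (σ j.1, j.2) = GN i j := by
  simp only [GN]
  rcases eq_or_ne i.1 j.1 with h | h
  · simp [h]
  · rw [if_neg (by simpa using fun hh => h (σ.injective hh)), if_neg h]

lemma BW_mkA (σ : Fin 12 ≃ Fin 12) (s : Fin 12 → ℚ) (hs : ∀ j, s j * s j = 1)
    (x y : WN) : BW (mkA σ s hs x) (mkA σ s hs y) = BW x y := by
  unfold BW
  rw [← Equiv.sum_comp (e' σ) (fun i => ∑ j : JN, mkA σ s hs x i * GN i j * mkA σ s hs y j)]
  refine Finset.sum_congr rfl fun i _ => ?_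
  rw [← Equiv.sum_comp (e' σ)
    (fun j => mkA σ s hs x (e' σ i) * GN (e' σ i) j * mkA σ s hs y j)]
  refine Finset.sum_congr rfl fun j _ => ?_
  obtain ⟨i1, i2⟩ := i
  obtain ⟨j1, j2⟩ := j
  show s (σ.symm (σ i1)) * x (σ.symm (σ i1), i2) * GN (σ i1, i2) (σ j1, j2) *
      (s (σ.symm (σ j1)) * y (σ.symm (σ j1), j2)) = _
  rw [σ.symm_apply_apply, σ.symm_apply_apply, GN_perm σ (i1, i2) (j1, j2)]
  rcases eq_or_ne i1 j1 with h | h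
  · subst h
    linear_combination (x (i1, i2) * GN (i1, i2) (i1, j2) * y (i1, j2)) * hs i1
  · rw [show GN (i1, i2) (j1, j2) = 0 from by simp [GN, h]]
    ring

/-! ### Membership of images of glue vectors -/

lemma Et_mem (j : Fin 12) (k : Fin 2) : Et j k ∈ NL :=
  Submodule.subset_span (Or.inl ⟨j, k, rfl⟩)

lemma wvec_mem (i : Fin 6) : wvec i ∈ NL :=
  Submodule.subset_span (Or.inr ⟨i, rfl⟩)

lemma EtV_mem (j : Fin 12) : EtV j ∈ NL := by
  have h : EtV j = Et j 0 + (Et j 1 + Et j 1) := by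
    rw [show EtV j = Et j 0 + 2 • Et j 1 from rfl, two_smul]
  rw [h]
  exact add_mem (Et_mem j 0) (add_mem (Et_mem j 1) (Et_mem j 1))

lemma mem_NL_of_coeffs (b : Fin 12 → ℚ) (c : Fin 6 → ℤ) (d : Fin 12 → ℤ)
    (h : ∀ m, b m = (∑ k : Fin 6, (c k : ℚ) * glueMat k m) + 3 * (d m : ℚ)) :
    (3 : ℚ)⁻¹ • ∑ m : Fin 12, b m • EtV m ∈ NL := by
  have key : (3 : ℚ)⁻¹ • ∑ m : Fin 12, b m • EtV m
      = (∑ k : Fin 6, (c k : ℚ) • wvec k) + ∑ m : Fin 12, (d m : ℚ) • EtV m := by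
    have hr : ∀ k : Fin 6, (c k : ℚ) • wvec k
        = ∑ m : Fin 12, ((c k : ℚ) * ((3 : ℚ)⁻¹ * glueMat k m)) • EtV m := by
      intro k
      rw [wvec, smul_smul, Finset.smul_sum]
      exact Finset.sum_congr rfl fun m _ => by rw [smul_smul]; ring_nf
    calc (3 : ℚ)⁻¹ • ∑ m : Fin 12, b m • EtV m
        = ∑ m : Fin 12, ((3 : ℚ)⁻¹ * b m) • EtV m := by
          rw [Finset.smul_sum]; exact Finset.sum_congr rfl fun m _ => by rw [smul_smul]
      _ = ∑ m : Fin 12, ((∑ k : Fin 6, (c k : ℚ) * ((3 : ℚ)⁻¹ * glueMat k m)) + (d m : ℚ))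
            • EtV m := by
          refine Finset.sum_congr rfl fun m _ => ?_
          congr 1
          rw [h m, mul_add]
          congr 1
          · rw [Finset.mul_sum]
            exact Finset.sum_congr rfl fun k _ => by ring
          · ring
      _ = (∑ k : Fin 6, (c k : ℚ) • wvec k) + ∑ m : Fin 12, (d m : ℚ) • EtV m := by
          simp only [add_smul, Finset.sum_add_distrib, Finset.sum_smul]
          congr 1
          rw [Finset.sum_comm]
          exact (Finset.sum_congr rfl fun k _ => (hr k).symm)
  rw [key]
  refine add_mem (Submodule.sum_mem _ fun k _ => ?_) (Submodule.sum_mem _ fun m _ => ?_)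
  · have h2 : (c k : ℚ) • wvec k = c k • wvec k := Int.cast_smul_eq_zsmul ℚ _ _
    rw [h2]
    exact Submodule.smul_mem _ _ (wvec_mem k)
  · have h2 : (d m : ℚ) • EtV m = d m • EtV m := Int.cast_smul_eq_zsmul ℚ _ _
    rw [h2]
    exact Submodule.smul_mem _ _ (EtV_mem m)

lemma mkA_wvec (σ : Fin 12 ≃ Fin 12) (s : Fin 12 → ℚ) (hs : ∀ j, s j * s j = 1) (i : Fin 6) :
    mkA σ s hs (wvec i)
      = (3 : ℚ)⁻¹ • ∑ m : Fin 12, (glueMat i (σ.symm m) * s (σ.symm m)) • EtV m := by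
  rw [wvec, map_smul, map_sum]
  congr 1
  rw [← Equiv.sum_comp σ (fun m => (glueMat i (σ.symm m) * s (σ.symm m)) • EtV m)]
  refine Finset.sum_congr rfl fun j _ => ?_
  rw [map_smul, mkA_EtV, σ.symm_apply_apply, smul_smul]

def c1 : Fin 6 → Fin 6 → ℤ :=
  ![![0,2,2,0,0,0], ![0,1,0,0,0,0], ![1,1,2,0,0,0], ![0,2,1,1,0,0], ![0,0,1,0,1,0], ![0,2,2,0,0,1]]
def d1 : Fin 6 → Fin 12 → ℤ :=
  ![![1,-1,-1,0,1,0,0,-1,-1,0,0,0], ![0,0,0,0,0,0,0,0,0,0,0,0],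
    ![1,-1,-1,-1,1,0,0,0,-1,0,0,0], ![1,0,-1,0,1,0,0,-1,0,0,0,0],
    ![1,0,0,-1,0,0,0,0,0,0,0,0], ![2,-1,0,0,1,0,0,-1,-1,0,0,0]]
def c2 : Fin 6 → Fin 6 → ℤ :=
  ![![1,0,0,0,0,0], ![2,0,2,0,0,0], ![1,1,2,0,0,0], ![0,0,2,1,0,0], ![1,0,2,0,1,0], ![2,0,2,0,0,1]]
def d2 : Fin 6 → Fin 12 → ℤ :=
  ![![0,0,0,0,0,0,0,0,0,0,0,0], ![1,-1,-1,-1,0,0,-1,0,-1,0,0,0],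
    ![1,-1,-1,-1,1,0,0,0,-1,0,0,0], ![1,0,0,-1,0,1,0,0,-1,0,0,0],
    ![1,-1,0,-1,0,0,0,0,-1,0,0,0], ![1,-2,0,-1,0,0,-1,0,-1,0,0,0]]

lemma coeffZ1 : ∀ (i : Fin 6) (m : Fin 12), glueZ i (inv1 m) * sgnZ (inv1 m)
    = (∑ k : Fin 6, c1 i k * glueZ k m) + 3 * d1 i m := by decide

lemma coeffZ2 : ∀ (i : Fin 6) (m : Fin 12), glueZ i (inv2 m)
    = (∑ k : Fin 6, c2 i k * glueZ k m) + 3 * d2 i m := by decide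

lemma coeff1 (i : Fin 6) (m : Fin 12) : glueMat i (inv1 m) * sgn1 (inv1 m)
    = (∑ k : Fin 6, (c1 i k : ℚ) * glueMat k m) + 3 * (d1 i m : ℚ) := by
  simp only [glueMat_eq_cast, sgn1_eq_cast]
  exact_mod_cast coeffZ1 i m

lemma coeff2 (i : Fin 6) (m : Fin 12) : glueMat i (inv2 m) * 1
    = (∑ k : Fin 6, (c2 i k : ℚ) * glueMat k m) + 3 * (d2 i m : ℚ) := by
  rw [mul_one]
  simp only [glueMat_eq_cast]
  exact_mod_cast coeffZ2 i m

/-! ### The two automorphisms -/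

def A1' : WN ≃ₗ[ℚ] WN := mkA p1 sgn1 hs1
def A2' : WN ≃ₗ[ℚ] WN := mkA p2 (fun _ => 1) (fun _ => by norm_num)

lemma A1_wvec_mem (i : Fin 6) : A1' (wvec i) ∈ NL := by
  rw [A1', mkA_wvec]
  exact mem_NL_of_coeffs _ (c1 i) (d1 i) (coeff1 i)

lemma A2_wvec_mem (i : Fin 6) : A2' (wvec i) ∈ NL := by
  rw [A2', mkA_wvec]
  exact mem_NL_of_coeffs _ (c2 i) (d2 i) (coeff2 i)

lemma sgn1_cases (j : Fin 12) : sgn1 j = 1 ∨ sgn1 j = -1 := by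
  rw [sgn1_eq_cast]
  have : sgnZ j = 1 ∨ sgnZ j = -1 := by revert j; decide
  rcases this with h | h <;> rw [h] <;> norm_num

lemma A1_maps (x : WN) (hx : x ∈ NL) : A1' x ∈ NL := by
  induction hx using Submodule.span_induction with
  | mem x h =>
    rcases h with ⟨j, k, rfl⟩ | ⟨i, rfl⟩
    · rw [show A1' (Et j k) = sgn1 j • Et (idx1 j) k from mkA_Et p1 sgn1 hs1 j k]
      rcases sgn1_cases j with h | h <;> rw [h]
      · rw [one_smul]; exact Et_mem _ _
      · rw [neg_smul, one_smul]; exact neg_mem (Et_mem _ _)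
    · exact A1_wvec_mem i
  | zero => rw [map_zero]; exact zero_mem _
  | add x y hx hy ihx ihy => rw [map_add]; exact add_mem ihx ihy
  | smul a x hx ih => rw [map_zsmul]; exact Submodule.smul_mem _ _ ih

lemma A2_maps (x : WN) (hx : x ∈ NL) : A2' x ∈ NL := by
  induction hx using Submodule.span_induction with
  | mem x h =>
    rcases h with ⟨j, k, rfl⟩ | ⟨i, rfl⟩
    · rw [show A2' (Et j k) = (1 : ℚ) • Et (idx2 j) k from mkA_Et p2 _ _ j k, one_smul]
      exact Et_mem _ _
    · exact A2_wvec_mem i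
  | zero => rw [map_zero]; exact zero_mem _
  | add x y hx hy ihx ihy => rw [map_add]; exact add_mem ihx ihy
  | smul a x hx ih => rw [map_zsmul]; exact Submodule.smul_mem _ _ ih

lemma mulApply (e f : WN ≃ₗ[ℚ] WN) (x : WN) : (e * f) x = e (f x) := rfl

lemma inv1_cube : ∀ j, inv1 (inv1 (inv1 j)) = j := by decide
lemma inv2_cube : ∀ j, inv2 (inv2 (inv2 j)) = j := by decide

lemma sprod1 (j : Fin 12) :
    sgn1 (inv1 j) * (sgn1 (inv1 (inv1 j)) * sgn1 j) = 1 := by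
  simp only [sgn1_eq_cast]
  exact_mod_cast (by decide :
    ∀ j : Fin 12, sgnZ (inv1 j) * (sgnZ (inv1 (inv1 j)) * sgnZ j) = 1) j

lemma A1_cube : A1' ^ 3 = 1 := by
  refine LinearEquiv.ext fun x => ?_
  show (A1' ^ 3) x = x
  rw [pow_succ, pow_succ, pow_one, mulApply, mulApply]
  funext p
  obtain ⟨j, k⟩ := p
  show sgn1 (inv1 j) * (sgn1 (inv1 (inv1 j)) * (sgn1 (inv1 (inv1 (inv1 j)))
    * x (inv1 (inv1 (inv1 j)), k))) = x (j, k)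
  rw [inv1_cube j]
  linear_combination x (j, k) * sprod1 j

lemma A2_cube : A2' ^ 3 = 1 := by
  refine LinearEquiv.ext fun x => ?_
  show (A2' ^ 3) x = x
  rw [pow_succ, pow_succ, pow_one, mulApply, mulApply]
  funext p
  obtain ⟨j, k⟩ := p
  show (1 : ℚ) * ((1 : ℚ) * ((1 : ℚ) * x (inv2 (inv2 (inv2 j)), k))) = x (j, k)
  rw [inv2_cube j]
  ring

lemma A1_ne_one : A1' ≠ 1 := by
  intro h
  have h2 : A1' (Et 0 0) ((0 : Fin 12), (0 : Fin 2))
      = (1 : WN ≃ₗ[ℚ] WN) (Et 0 0) ((0 : Fin 12), (0 : Fin 2)) := by rw [h]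
  have hL : A1' (Et 0 0) ((0 : Fin 12), (0 : Fin 2)) = 0 := by
    show sgn1 (inv1 0) * Et 0 0 (inv1 0, 0) = 0
    rw [Et, Pi.single_apply, if_neg (by decide), mul_zero]
  have hR : (1 : WN ≃ₗ[ℚ] WN) (Et 0 0) ((0 : Fin 12), (0 : Fin 2)) = 1 := by
    show Et 0 0 ((0 : Fin 12), (0 : Fin 2)) = 1
    rw [Et, Pi.single_apply, if_pos rfl]
  rw [hL, hR] at h2
  norm_num at h2

lemma A2_ne_one : A2' ≠ 1 := by
  intro h
  have h2 : A2' (Et 0 0) ((0 : Fin 12), (0 : Fin 2))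
      = (1 : WN ≃ₗ[ℚ] WN) (Et 0 0) ((0 : Fin 12), (0 : Fin 2)) := by rw [h]
  have hL : A2' (Et 0 0) ((0 : Fin 12), (0 : Fin 2)) = 0 := by
    show (1 : ℚ) * Et 0 0 (inv2 0, 0) = 0
    rw [Et, Pi.single_apply, if_neg (by decide), mul_zero]
  have hR : (1 : WN ≃ₗ[ℚ] WN) (Et 0 0) ((0 : Fin 12), (0 : Fin 2)) = 1 := by
    show Et 0 0 ((0 : Fin 12), (0 : Fin 2)) = 1
    rw [Et, Pi.single_apply, if_pos rfl]
  rw [hL, hR] at h2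
  norm_num at h2

lemma comm_idx : ∀ j, inv2 (inv1 j) = inv1 (inv2 j) := by decide

lemma comm_sgn (j : Fin 12) : sgn1 (inv1 j) = sgn1 (inv1 (inv2 j)) := by
  simp only [sgn1_eq_cast]
  exact_mod_cast congrArg (Int.cast : ℤ → ℚ)
    ((by decide : ∀ j : Fin 12, sgnZ (inv1 j) = sgnZ (inv1 (inv2 j))) j)

lemma A_comm : A1' * A2' = A2' * A1' := by
  refine LinearEquiv.ext fun x => ?_
  rw [mulApply, mulApply]
  funext p
  obtain ⟨j, k⟩ := p
  show sgn1 (inv1 j) * ((1 : ℚ) * x (inv2 (inv1 j), k))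
    = (1 : ℚ) * (sgn1 (inv1 (inv2 j)) * x (inv1 (inv2 j), k))
  rw [comm_idx j, comm_sgn j]
  ring

lemma hord1 : orderOf A1' = 3 := orderOf_eq_prime A1_cube A1_ne_one
lemma hord2 : orderOf A2' = 3 := orderOf_eq_prime A2_cube A2_ne_one

/-! ### The image of the lattice -/

lemma image_eq (A : WN ≃ₗ[ℚ] WN) (hmap : ∀ x ∈ NL, A x ∈ NL) (hcube : A ^ 3 = 1) :
    (fun v => A v) '' NL = NL := by
  apply Set.Subset.antisymm
  · rintro _ ⟨y, hy, rfl⟩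
    exact hmap y hy
  · intro x hx
    refine ⟨A (A x), hmap _ (hmap _ hx), ?_⟩
    show A (A (A x)) = x
    have h3 : A (A (A x)) = (A ^ 3) x := by
      rw [pow_succ, pow_succ, pow_one, mulApply, mulApply]
    rw [h3, hcube]
    rfl

/-! ### The subgroup generated by the two automorphisms -/

lemma A1'_app : ∀ (x : WN) (p : JN), A1' x p = sgn1 (inv1 p.1) * x (inv1 p.1, p.2) :=
  fun _ _ => rfl

lemma A2'_app : ∀ (x : WN) (p : JN), A2' x p = x (inv2 p.1, p.2) :=
  fun _ _ => one_mul _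

lemma Et_app : ∀ (j : Fin 12) (k : Fin 2) (p : JN), Et j k p = if p = (j, k) then 1 else 0 :=
  fun j k p => Pi.single_apply _ _ _

lemma key_pow : ∀ m n : ℕ, m < 3 → n < 3 → A1' ^ m * A2' ^ n = 1 → m = 0 ∧ n = 0 := by
  have eval : ∀ (e : WN ≃ₗ[ℚ] WN), e = 1 →
      e (Et 0 0) ((0 : Fin 12), (0 : Fin 2)) = 1 := by
    intro e he
    rw [he]
    show Et 0 0 ((0 : Fin 12), (0 : Fin 2)) = 1
    rw [Et, Pi.single_apply, if_pos rfl]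
  intro m n hm hn h
  interval_cases m <;> interval_cases n <;>
    first
      | exact ⟨rfl, rfl⟩
      | (exfalso
         have h2 := eval _ h
         simp only [pow_succ, pow_zero, pow_one, one_mul, mul_one, mulApply,
           LinearEquiv.coe_one, id_eq, A1'_app, A2'_app, Et_app] at h2
         rw [if_neg (by decide)] at h2
         norm_num at h2)

lemma hA1powZ : ∀ m n : ZMod 3, A1' ^ (m + n).val = A1' ^ m.val * A1' ^ n.val := by
  intro m n
  rw [← pow_add]
  apply pow_eq_pow_iff_modEq.mpr
  rw [hord1, ZMod.val_add]
  exact Nat.mod_modEq _ 3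

lemma hA2powZ : ∀ m n : ZMod 3, A2' ^ (m + n).val = A2' ^ m.val * A2' ^ n.val := by
  intro m n
  rw [← pow_add]
  apply pow_eq_pow_iff_modEq.mpr
  rw [hord2, ZMod.val_add]
  exact Nat.mod_modEq _ 3

def φN : Multiplicative (ZMod 3 × ZMod 3) →* (WN ≃ₗ[ℚ] WN) where
  toFun x := A1' ^ (x.toAdd.1.val) * A2' ^ (x.toAdd.2.val)
  map_one' := by
    show A1' ^ (0 : ZMod 3).val * A2' ^ (0 : ZMod 3).val = 1
    rw [ZMod.val_zero, pow_zero, pow_zero, one_mul]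
  map_mul' x y := by
    have hC : Commute A1' A2' := A_comm
    show A1' ^ ((x.toAdd.1 + y.toAdd.1).val) * A2' ^ ((x.toAdd.2 + y.toAdd.2).val)
      = A1' ^ x.toAdd.1.val * A2' ^ x.toAdd.2.val
        * (A1' ^ y.toAdd.1.val * A2' ^ y.toAdd.2.val)
    rw [hA1powZ, hA2powZ,
      (hC.pow_pow y.toAdd.1.val x.toAdd.2.val).symm.mul_mul_mul_comm]

lemma φN_inj : Function.Injective φN := by
  refine (injective_iff_map_eq_one φN).mpr fun x hx => ?_
  have hk := key_pow x.toAdd.1.val x.toAdd.2.val (ZMod.val_lt _) (ZMod.val_lt _) hx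
  have h1 : x.toAdd.1 = 0 := (ZMod.val_eq_zero _).mp hk.1
  have h2 : x.toAdd.2 = 0 := (ZMod.val_eq_zero _).mp hk.2
  have h3 : x.toAdd = (0, 0) := Prod.ext h1 h2
  show x = Multiplicative.ofAdd (0, 0)
  rw [← h3]
  rfl

lemma φN_range : φN.range = Subgroup.closure {A1', A2'} := by
  apply le_antisymm
  · rintro g ⟨x, rfl⟩
    show A1' ^ (x.toAdd.1.val) * A2' ^ (x.toAdd.2.val) ∈ Subgroup.closure {A1', A2'}
    have m1 : A1' ∈ Subgroup.closure {A1', A2'} :=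
      Subgroup.subset_closure (Set.mem_insert _ _)
    have m2 : A2' ∈ Subgroup.closure {A1', A2'} :=
      Subgroup.subset_closure (Set.mem_insert_of_mem _ rfl)
    exact mul_mem (pow_mem m1 _) (pow_mem m2 _)
  · rw [Subgroup.closure_le]
    rintro g hg
    rcases hg with rfl | rfl
    · refine ⟨Multiplicative.ofAdd ((1 : ZMod 3), (0 : ZMod 3)), ?_⟩
      show A1' ^ (1 : ZMod 3).val * A2' ^ (0 : ZMod 3).val = A1'
      rw [ZMod.val_zero, pow_zero, mul_one, ZMod.val_one, pow_one]
    · refine ⟨Multiplicative.ofAdd ((0 : ZMod 3), (1 : ZMod 3)), ?_⟩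
      show A1' ^ (0 : ZMod 3).val * A2' ^ (1 : ZMod 3).val = A2'
      rw [ZMod.val_zero, pow_zero, one_mul, ZMod.val_one, pow_one]

lemma closure_iso : Nonempty ((Subgroup.closure {A1', A2'} : Subgroup (WN ≃ₗ[ℚ] WN)) ≃*
    Multiplicative (ZMod 3 × ZMod 3)) := by
  have e1 : Multiplicative (ZMod 3 × ZMod 3) ≃* φN.range :=
    MulEquiv.ofBijective φN.rangeRestrict
      ⟨MonoidHom.rangeRestrict_injective_iff.mpr φN_inj, φN.rangeRestrict_surjective⟩
  exact ⟨(MulEquiv.subgroupCongr φN_range).symm.trans e1.symm⟩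

theorem statement13 :
    ∃ A1 A2 : WN ≃ₗ[ℚ] WN,
      -- defining values of α̃¹ and α̃² on the basis vectors Ẽ_j^(ℓ)
      (∀ (j : Fin 12) (k : Fin 2), A1 (Et j k) = sgn1 j • Et (idx1 j) k) ∧
      (∀ (j : Fin 12) (k : Fin 2), A2 (Et j k) = Et (idx2 j) k) ∧
      -- they preserve the bilinear form
      (∀ x y : WN, BW (A1 x) (A1 y) = BW x y) ∧
      (∀ x y : WN, BW (A2 x) (A2 y) = BW x y) ∧
      -- they map N onto itself
      ((fun v => A1 v) '' NL = NL) ∧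
      ((fun v => A2 v) '' NL = NL) ∧
      -- each has order 3 and they commute
      orderOf A1 = 3 ∧ orderOf A2 = 3 ∧ A1 * A2 = A2 * A1 ∧
      -- the subgroup of Aut(N) they generate is isomorphic to ℤ/3 × ℤ/3
      Nonempty ((Subgroup.closure {A1, A2} : Subgroup (WN ≃ₗ[ℚ] WN)) ≃*
        Multiplicative (ZMod 3 × ZMod 3)) := by
  refine ⟨A1', A2', fun j k => mkA_Et p1 sgn1 hs1 j k, ?_, BW_mkA p1 sgn1 hs1,
    BW_mkA p2 _ _, image_eq A1' A1_maps A1_cube, image_eq A2' A2_maps A2_cube,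
    hord1, hord2, A_comm, closure_iso⟩
  intro j k
  rw [show A2' (Et j k) = (1 : ℚ) • Et (idx2 j) k from mkA_Et p2 _ _ j k, one_smul]

end
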